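/- Let b, a, s be positive integers and define n(b,s) = ∏_p p^{v_p(b) + floor(log_p s)}, the product taken over primes p dividing b. If b divides m(a,s) = gcd{C(a,i) : 1 ≤ i ≤ s}, then n(b,s) divides a. -/

import Mathlib

/-- Key estimate: if `r ≤ v_p a`, then `v_p (C(a, p^r)) ≤ v_p a - r`. -/
lemma key_choose_pow_factorization {p a r : ℕ} (hp : p.Prime) (ha : 0 < a)
    (hr : r ≤ a.factorization p) :
    (a.choose (p ^ r)).factorization p + r ≤ a.factorization p := by
  set t := a.factorization p with ht
  have hpt : p ^ t ∣ a := Nat.ordProj_dvd a p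
  have hpr_dvd : p ^ r ∣ a := dvd_trans (pow_dvd_pow p hr) hpt
  have hpr_le : p ^ r ≤ a := Nat.le_of_dvd ha hpr_dvd
  have hchoose_pos : 0 < a.choose (p ^ r) := Nat.choose_pos hpr_le
  have hlog : Nat.log p a < Nat.log p a + 1 := Nat.lt_succ_self _
  have hmul := Nat.Prime.emultiplicity_choose hp (k := p ^ r) (b := Nat.log p a + 1) hpr_le hlog
  -- the carry set is contained in `Ico (r+1) (t+1)`
  have hsubset : ({i ∈ Finset.Ico 1 (Nat.log p a + 1) |
      p ^ i ≤ p ^ r % p ^ i + (a - p ^ r) % p ^ i} : Finset ℕ) ⊆ Finset.Ico (r + 1) (t + 1) := by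
    intro i hi
    simp only [Finset.mem_filter, Finset.mem_Ico] at hi ⊢
    obtain ⟨⟨hi1, hi2⟩, hcarry⟩ := hi
    constructor
    · -- show r < i
      by_contra hir
      push_neg at hir
      have hir' : i ≤ r := by omega
      have h1 : p ^ i ∣ p ^ r := pow_dvd_pow p hir'
      have h2 : p ^ i ∣ a := dvd_trans h1 hpr_dvd
      have h3 : p ^ i ∣ (a - p ^ r) := Nat.dvd_sub h2 h1
      have e1 : p ^ r % p ^ i = 0 := Nat.mod_eq_zero_of_dvd h1
      have e2 : (a - p ^ r) % p ^ i = 0 := Nat.mod_eq_zero_of_dvd h3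
      have := pow_pos hp.pos i
      omega
    · -- show i < t + 1
      by_contra hit
      push_neg at hit
      have hti : t < i := by omega
      set m := a % p ^ i with hm
      have hmdvd : p ^ t ∣ m := (Nat.dvd_mod_iff (pow_dvd_pow p hti.le)).mpr hpt
      have hmne : m ≠ 0 := by
        intro h0
        have : p ^ (t + 1) ∣ a := dvd_trans (pow_dvd_pow p hti) (Nat.dvd_of_mod_eq_zero h0)
        exact Nat.pow_succ_factorization_not_dvd ha.ne' hp this
      have hmge : p ^ r ≤ m := le_trans (Nat.pow_le_pow_right hp.pos hr)
        (Nat.le_of_dvd (Nat.pos_of_ne_zero hmne) hmdvd)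
      have hmlt : m < p ^ i := Nat.mod_lt _ (pow_pos hp.pos i)
      have hpr_mod : p ^ r % p ^ i = p ^ r :=
        Nat.mod_eq_of_lt (Nat.pow_lt_pow_right hp.one_lt (lt_of_le_of_lt hr hti))
      have hdiv : a = p ^ i * (a / p ^ i) + m := (Nat.div_add_mod a (p ^ i)).symm
      have hsub : a - p ^ r = p ^ i * (a / p ^ i) + (m - p ^ r) := by omega
      have hmod2 : (a - p ^ r) % p ^ i = m - p ^ r := by
        rw [hsub, Nat.mul_add_mod, Nat.mod_eq_of_lt (by omega)]
      rw [hpr_mod, hmod2] at hcarry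
      omega
  have hcard : ({i ∈ Finset.Ico 1 (Nat.log p a + 1) |
      p ^ i ≤ p ^ r % p ^ i + (a - p ^ r) % p ^ i} : Finset ℕ).card ≤ t - r := by
    have := Finset.card_le_card hsubset
    simpa [Nat.card_Ico] using this
  -- convert emultiplicity to factorization
  have : Fact p.Prime := ⟨hp⟩
  have hfac : (a.choose (p ^ r)).factorization p ≤ t - r := by
    have h1 : ((a.choose (p ^ r)).factorization p : ℕ∞) ≤ (t - r : ℕ) := by
      rw [Nat.factorization_def _ hp, padicValNat_eq_emultiplicity hchoose_pos.ne', hmul]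
      exact_mod_cast hcard
    exact_mod_cast h1
  omega

/-- If `b` divides `m a s = gcd {C(a,i) : 1 ≤ i ≤ s}`, then
`n(b,s) = ∏_{p ∣ b prime} p ^ (v_p b + ⌊log_p s⌋)` divides `a`. -/
theorem n_b_s_dvd_of_dvd_gcd_choose (b a s : ℕ) (hb : 0 < b) (ha : 0 < a) (hs : 0 < s)
    (hdvd : b ∣ (Finset.Icc 1 s).gcd (Nat.choose a)) :
    (∏ p ∈ b.primeFactors, p ^ (b.factorization p + Nat.log p s)) ∣ a := by
  -- b divides C(a,k) for every k ∈ [1,s]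
  have hbk : ∀ k ∈ Finset.Icc 1 s, b ∣ a.choose k := fun k hk =>
    hdvd.trans (Finset.gcd_dvd hk)
  have hba : b ∣ a := by
    have := hbk 1 (Finset.mem_Icc.mpr ⟨le_refl 1, hs⟩)
    simpa using this
  -- key pointwise bound
  have hkey : ∀ p ∈ b.primeFactors, b.factorization p + Nat.log p s ≤ a.factorization p := by
    intro p hp'
    have hp : p.Prime := Nat.prime_of_mem_primeFactors hp'
    have hpb : 0 < b.factorization p := by
      exact Nat.Prime.factorization_pos_of_dvd hp hb.ne' (Nat.dvd_of_mem_primeFactors hp')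
    set j := Nat.log p s with hj
    set t := a.factorization p with htdef
    set r := min j t with hrdef
    have hpr_le_s : p ^ r ≤ s := le_trans (Nat.pow_le_pow_right hp.pos (min_le_left _ _))
      (Nat.pow_log_le_self p hs.ne')
    have hmem : p ^ r ∈ Finset.Icc 1 s := by
      exact Finset.mem_Icc.mpr ⟨Nat.one_le_pow _ _ hp.pos, hpr_le_s⟩
    have hbC : b ∣ a.choose (p ^ r) := hbk _ hmem
    have hCpos : 0 < a.choose (p ^ r) := by
      apply Nat.choose_pos
      exact Nat.le_of_dvd ha (dvd_trans (pow_dvd_pow p (min_le_right _ _)) (Nat.ordProj_dvd a p))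
    have hble : b.factorization p ≤ (a.choose (p ^ r)).factorization p :=
      (Nat.factorization_le_iff_dvd hb.ne' hCpos.ne').mpr hbC p
    have hk := key_choose_pow_factorization (r := r) hp ha (le_trans (min_le_right j t) le_rfl)
    -- so v_p b + r ≤ t; since v_p b ≥ 1, r < t so r = j
    have h1 : b.factorization p + r ≤ t := le_trans (by omega) hk
    have hrj : r = j := by
      rcases min_cases j t with ⟨h, _⟩ | ⟨h, hlt⟩
      · exact h
      · omega
    omega
  -- combine: the product divides ∏_{p ∈ a.primeFactors} p ^ v_p a = a
  have hsub : b.primeFactors ⊆ a.primeFactors := Nat.primeFactors_mono hba ha.ne'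
  calc (∏ p ∈ b.primeFactors, p ^ (b.factorization p + Nat.log p s))
      ∣ ∏ p ∈ b.primeFactors, p ^ a.factorization p :=
        Finset.prod_dvd_prod_of_dvd _ _ (fun p hp => pow_dvd_pow p (hkey p hp))
    _ ∣ ∏ p ∈ a.primeFactors, p ^ a.factorization p :=
        Finset.prod_dvd_prod_of_subset _ _ _ hsub
    _ = a := by
        rw [← Nat.support_factorization]
        exact Nat.factorization_prod_pow_eq_self ha.ne'
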